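/- Let I = [a,b] ⊂ ℝ with a < b, let γ > 0, ε ∈ (0,1), c > 0, let K : I → ℝ be measurable with 0 < K_0 ≤ K(x) ≤ K_1, and let H : I → ℝ be measurable with 0 ≤ H(x) ≤ H_1 and ε^γ H_1 ≤ K_0. Define Q = I × (0,1) and θ₂^ε = {(x,y) ∈ ℝ² : x ∈ I, 1 − ε^γ H(x)/K(x) < y < 1}. Let f ∈ L²(Q) satisfy ∫_{θ₂^ε} f² dx dy ≤ c ε^γ, and suppose w is continuously differentiable on an open set containing the closure of Q and satisfies the energy identity ∫_Q [ K(x) (∂w/∂x)² + (1/(ε² K(x))) (∂w/∂y)² + K(x) w² ] dx dy = (1/ε^γ) ∫_{θ₂^ε} K(x) f w dx dy. Then there exists a constant C > 0 depending only on c, K_0, K_1 and H_1 (and not on ε, K, H, f or w) such that ∫_Q w² dx dy ≤ C, ∫_Q (∂w/∂x)² dx dy ≤ C, and (1/ε²) ∫_Q (∂w/∂y)² dx dy ≤ C. -/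

import Mathlib

open MeasureTheory Filter Set


lemma aux_integrableOn_of_bdd {s : Set (ℝ × ℝ)} (hs : MeasurableSet s)
    (hv : volume s < ⊤) {g : ℝ × ℝ → ℝ}
    (hg : AEStronglyMeasurable g (volume.restrict s)) {M : ℝ}
    (hM : ∀ p ∈ s, |g p| ≤ M) : IntegrableOn g s := by
  haveI : IsFiniteMeasure (volume.restrict s) := ⟨by rwa [Measure.restrict_apply_univ]⟩
  refine Integrable.mono' (integrable_const M) hg ?_
  rw [ae_restrict_iff' hs]
  exact ae_of_all _ fun p hp => by simpa [Real.norm_eq_abs] using hM p hp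

lemma aux_oneD (u u' : ℝ → ℝ) (hu : ∀ t ∈ Set.Icc (0:ℝ) 1, HasDerivAt u (u' t) t)
    (hc : ContinuousOn u' (Set.Icc (0:ℝ) 1)) {y : ℝ} (hy : y ∈ Set.Icc (0:ℝ) 1) :
    u y ^ 2 ≤ ∫ t in Set.Ioo (0:ℝ) 1, (2 * u t ^ 2 + u' t ^ 2) := by
  have hcu : ContinuousOn u (Set.Icc (0:ℝ) 1) :=
    fun t ht => (hu t ht).continuousAt.continuousWithinAt
  have hiu2 : IntegrableOn (fun t => u t ^ 2) (Set.Icc (0:ℝ) 1) :=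
    (hcu.pow 2).integrableOn_Icc
  have hiu'2 : IntegrableOn (fun t => u' t ^ 2) (Set.Icc (0:ℝ) 1) :=
    (hc.pow 2).integrableOn_Icc
  have hisum : IntegrableOn (fun t => u t ^ 2 + u' t ^ 2) (Set.Icc (0:ℝ) 1) :=
    hiu2.add hiu'2
  set B : ℝ := ∫ t in Set.Icc (0:ℝ) 1, (u t ^ 2 + u' t ^ 2) with hB
  have key : ∀ s ∈ Set.Icc (0:ℝ) 1, u y ^ 2 ≤ u s ^ 2 + B := by
    intro s hs
    have hsub : Set.uIcc s y ⊆ Set.Icc (0:ℝ) 1 := Set.uIcc_subset_Icc hs hy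
    have hd : ∀ t ∈ Set.uIcc s y, HasDerivAt (fun t => u t ^ 2) (2 * u t * u' t) t := by
      intro t ht
      have := (hu t (hsub ht)).fun_pow 2
      simpa [mul_comm, mul_assoc, mul_left_comm] using this
    have hcd : ContinuousOn (fun t => 2 * u t * u' t) (Set.Icc (0:ℝ) 1) :=
      (continuousOn_const.mul hcu).mul hc
    have hii : IntervalIntegrable (fun t => 2 * u t * u' t) volume s y :=
      (hcd.mono hsub).intervalIntegrable
    have hftc := intervalIntegral.integral_eq_sub_of_hasDerivAt hd hii
    -- bound the interval integral by the integral of absolute values on [0,1]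
    have habs : IntegrableOn (fun t => |2 * u t * u' t|) (Set.Icc (0:ℝ) 1) :=
      hcd.abs.integrableOn_Icc
    have hIoc : ∀ p q : ℝ, p ∈ Set.Icc (0:ℝ) 1 → q ∈ Set.Icc (0:ℝ) 1 → p ≤ q →
        (∫ t in p..q, |2 * u t * u' t|) ≤ ∫ t in Set.Icc (0:ℝ) 1, |2 * u t * u' t| := by
      intro p q hp hq hpq
      rw [intervalIntegral.integral_of_le hpq]
      refine setIntegral_mono_set habs (ae_of_all _ fun t => abs_nonneg _) ?_
      exact HasSubset.Subset.eventuallyLE (Set.Ioc_subset_Icc_self.trans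
        (Set.Icc_subset_Icc hp.1 hq.2))
    have hbound : (∫ t in s..y, 2 * u t * u' t) ≤ ∫ t in Set.Icc (0:ℝ) 1, |2 * u t * u' t| := by
      rcases le_total s y with h | h
      · calc (∫ t in s..y, 2 * u t * u' t) ≤ |∫ t in s..y, 2 * u t * u' t| := le_abs_self _
          _ ≤ ∫ t in s..y, |2 * u t * u' t| :=
            intervalIntegral.abs_integral_le_integral_abs h
          _ ≤ _ := hIoc s y hs hy h
      · calc (∫ t in s..y, 2 * u t * u' t) = -(∫ t in y..s, 2 * u t * u' t) :=
            (intervalIntegral.integral_symm _ _)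
          _ ≤ |∫ t in y..s, 2 * u t * u' t| := neg_le_abs _
          _ ≤ ∫ t in y..s, |2 * u t * u' t| :=
            intervalIntegral.abs_integral_le_integral_abs h
          _ ≤ _ := hIoc y s hy hs h
    have habs_le : (∫ t in Set.Icc (0:ℝ) 1, |2 * u t * u' t|) ≤ B := by
      refine setIntegral_mono_on habs hisum measurableSet_Icc fun t _ => ?_
      rw [abs_le]
      constructor <;> nlinarith [sq_nonneg (u t - u' t), sq_nonneg (u t + u' t)]
    nlinarith [hftc, hbound, habs_le]
  -- integrate the bound over s ∈ Ioo 0 1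
  have hvol : (volume (Set.Ioo (0:ℝ) 1)).toReal = 1 := by
    simp [Real.volume_Ioo]
  have h1 : u y ^ 2 = ∫ _ in Set.Ioo (0:ℝ) 1, u y ^ 2 := by
    rw [setIntegral_const, measureReal_def, hvol, one_smul]
  have h2 : (∫ _ in Set.Ioo (0:ℝ) 1, u y ^ 2) ≤ ∫ s in Set.Ioo (0:ℝ) 1, (u s ^ 2 + B) := by
    refine setIntegral_mono_on ?_ ?_ measurableSet_Ioo fun s hs => ?_
    · exact integrableOn_const (by simp [Real.volume_Ioo])
    · exact (hiu2.mono_set Set.Ioo_subset_Icc_self).add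
        (integrableOn_const (by simp [Real.volume_Ioo]))
    · exact key s (Set.Ioo_subset_Icc_self hs)
  have h3 : (∫ s in Set.Ioo (0:ℝ) 1, (u s ^ 2 + B)) =
      (∫ s in Set.Ioo (0:ℝ) 1, u s ^ 2) + B := by
    rw [integral_add (hiu2.mono_set Set.Ioo_subset_Icc_self)
      (integrableOn_const (by simp [Real.volume_Ioo]))]
    rw [setIntegral_const, measureReal_def, hvol, one_smul]
  have h4 : B = ∫ t in Set.Ioo (0:ℝ) 1, (u t ^ 2 + u' t ^ 2) := by
    rw [hB, integral_Icc_eq_integral_Ioo]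
  have h5 : (∫ s in Set.Ioo (0:ℝ) 1, u s ^ 2) +
      (∫ t in Set.Ioo (0:ℝ) 1, (u t ^ 2 + u' t ^ 2)) =
      ∫ t in Set.Ioo (0:ℝ) 1, (2 * u t ^ 2 + u' t ^ 2) := by
    rw [← integral_add (hiu2.mono_set Set.Ioo_subset_Icc_self)
      (hisum.mono_set Set.Ioo_subset_Icc_self)]
    refine setIntegral_congr_fun measurableSet_Ioo fun t _ => by ring
  linarith [h2, h3]

lemma aux_strip (u u' : ℝ → ℝ) (hu : ∀ t ∈ Set.Icc (0:ℝ) 1, HasDerivAt u (u' t) t)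
    (hc : ContinuousOn u' (Set.Icc (0:ℝ) 1)) {δ : ℝ} (h0 : 0 ≤ δ) (h1 : δ ≤ 1) :
    (∫ y in Set.Ioo (1 - δ) 1, u y ^ 2) ≤
      δ * ∫ t in Set.Ioo (0:ℝ) 1, (2 * u t ^ 2 + u' t ^ 2) := by
  have hcu : ContinuousOn u (Set.Icc (0:ℝ) 1) :=
    fun t ht => (hu t ht).continuousAt.continuousWithinAt
  have hsub : Set.Ioo (1 - δ) 1 ⊆ Set.Icc (0:ℝ) 1 :=
    fun y hy => ⟨by linarith [hy.1], le_of_lt hy.2⟩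
  set G : ℝ := ∫ t in Set.Ioo (0:ℝ) 1, (2 * u t ^ 2 + u' t ^ 2) with hG
  have h2 : (∫ y in Set.Ioo (1 - δ) 1, u y ^ 2) ≤ ∫ _ in Set.Ioo (1 - δ) 1, G := by
    refine setIntegral_mono_on ?_ ?_ measurableSet_Ioo fun y hy => ?_
    · exact ((hcu.pow 2).integrableOn_Icc).mono_set hsub
    · exact integrableOn_const (by simp [Real.volume_Ioo])
    · exact aux_oneD u u' hu hc (hsub hy)
  have h3 : (∫ _ in Set.Ioo (1 - δ) 1, G) = δ * G := by
    rw [setIntegral_const, measureReal_def, Real.volume_Ioo, smul_eq_mul,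
      show (1 : ℝ) - (1 - δ) = δ by ring, ENNReal.toReal_ofReal h0]
  linarith [h2, h3.le, h3.ge]

set_option maxHeartbeats 2000000 in
/-- Uniform a priori estimates for the anisotropic rescaled problem on the fixed rectangle:
the `L²` norms of `w`, of `∂w/∂x`, and the rescaled `L²` norm of `∂w/∂y` are bounded by a
constant depending only on `c`, `K₀`, `K₁`, `H₁` (and not on `ε`, `K`, `H`, `f`, `w`). -/
theorem rectangle_anisotropic_a_priori_bounds
    (a b : ℝ) (hab : a < b) (γ : ℝ) (hγ : 0 < γ) (c : ℝ) (hc : 0 < c)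
    (K₀ K₁ H₁ : ℝ) (hK₀ : 0 < K₀) (hK₀₁ : K₀ ≤ K₁) (hH₁ : 0 ≤ H₁)
    (Q : Set (ℝ × ℝ)) (hQ : Q = (Set.Icc a b) ×ˢ (Set.Ioo (0 : ℝ) 1)) :
    ∃ C : ℝ, 0 < C ∧
      ∀ ε ∈ Set.Ioo (0 : ℝ) 1, ∀ K H : ℝ → ℝ,
        Measurable K → Measurable H →
        (∀ x ∈ Set.Icc a b, K₀ ≤ K x ∧ K x ≤ K₁) →
        (∀ x ∈ Set.Icc a b, 0 ≤ H x ∧ H x ≤ H₁) →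
        ε ^ γ * H₁ ≤ K₀ →
        ∀ θ₂ : Set (ℝ × ℝ),
          θ₂ = {p : ℝ × ℝ | p.1 ∈ Set.Icc a b ∧
            1 - ε ^ γ * H p.1 / K p.1 < p.2 ∧ p.2 < 1} →
        ∀ f : ℝ × ℝ → ℝ, MemLp f 2 (volume.restrict Q) →
          (∫ p in θ₂, (f p) ^ 2) ≤ c * ε ^ γ →
        ∀ (w : ℝ × ℝ → ℝ) (U : Set (ℝ × ℝ)), IsOpen U → closure Q ⊆ U →
          ContDiffOn ℝ 1 w U →
          (∫ p in Q,
              (K p.1 * (fderiv ℝ w p (1, 0)) ^ 2 +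
                (1 / (ε ^ 2 * K p.1)) * (fderiv ℝ w p (0, 1)) ^ 2 +
                K p.1 * (w p) ^ 2) =
            (1 / ε ^ γ) * ∫ p in θ₂, K p.1 * f p * w p) →
          (∫ p in Q, (w p) ^ 2) ≤ C ∧
          (∫ p in Q, (fderiv ℝ w p (1, 0)) ^ 2) ≤ C ∧
          (1 / ε ^ 2) * (∫ p in Q, (fderiv ℝ w p (0, 1)) ^ 2) ≤ C := by
  have hK₁ : 0 < K₁ := lt_of_lt_of_le hK₀ hK₀₁
  -- constants
  set D : ℝ := K₁ * (H₁ / K₀) * (2 / K₀ + K₁) with hD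
  have hD0 : 0 ≤ D := by positivity
  set B : ℝ := 1 / (2 * D + 2) with hBdef
  have hB : 0 < B := by positivity
  set A : ℝ := 1 / (4 * B) with hAdef
  have hA : 0 < A := by positivity
  have hAB : 4 * A * B = 1 := by
    rw [hAdef]; field_simp
  have hBD : B * D ≤ 1 / 2 := by
    rw [hBdef, div_mul_eq_mul_div, div_le_div_iff₀ (by positivity) (by norm_num)]
    linarith
  set M : ℝ := 2 * K₁ * A * c with hM
  have hM0 : 0 < M := by positivity
  refine ⟨M / K₀ + K₁ * M + 1, by positivity, ?_⟩
  intro ε hε K H hKm hHm hKb hHb hεH θ₂ hθ f hf hfθ w U hU hclU hw hEI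
  obtain ⟨hε0, hε1⟩ := hε
  have hεγ : (0:ℝ) < ε ^ γ := Real.rpow_pos_of_pos hε0 γ
  have hε2 : (0:ℝ) < ε ^ 2 := by positivity
  have hε2le : ε ^ 2 ≤ 1 := by nlinarith
  -- geometry
  have hclQ : closure Q = (Set.Icc a b) ×ˢ (Set.Icc (0:ℝ) 1) := by
    rw [hQ, closure_prod_eq, closure_Icc, closure_Ioo (by norm_num : (0:ℝ) ≠ 1)]
  have hQU : ∀ x ∈ Set.Icc a b, ∀ t ∈ Set.Icc (0:ℝ) 1, (x, t) ∈ U := by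
    intro x hx t ht
    exact hclU (hclQ ▸ Set.mk_mem_prod hx ht)
  have hQsubU : Q ⊆ U := subset_closure.trans hclU
  have hQm : MeasurableSet Q := by
    rw [hQ]; exact measurableSet_Icc.prod measurableSet_Ioo
  have hθm : MeasurableSet θ₂ := by
    rw [hθ]
    have h1 : MeasurableSet {p : ℝ × ℝ | p.1 ∈ Set.Icc a b} :=
      measurable_fst measurableSet_Icc
    have h2 : MeasurableSet {p : ℝ × ℝ | 1 - ε ^ γ * H p.1 / K p.1 < p.2} :=
      measurableSet_lt (Measurable.sub measurable_const
        (((measurable_const.mul (hHm.comp measurable_fst))).div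
          (hKm.comp measurable_fst))) measurable_snd
    have h3 : MeasurableSet {p : ℝ × ℝ | p.2 < 1} :=
      measurableSet_lt measurable_snd measurable_const
    exact h1.inter (h2.inter h3)
  have hδb : ∀ x ∈ Set.Icc a b, 0 ≤ ε ^ γ * H x / K x ∧
      ε ^ γ * H x / K x ≤ ε ^ γ * H₁ / K₀ ∧ ε ^ γ * H₁ / K₀ ≤ 1 := by
    intro x hx
    obtain ⟨hK0x, hK1x⟩ := hKb x hx
    obtain ⟨hH0x, hH1x⟩ := hHb x hx
    refine ⟨div_nonneg (mul_nonneg hεγ.le hH0x) (by linarith), ?_, ?_⟩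
    · exact div_le_div₀ (mul_nonneg hεγ.le hH₁)
        (mul_le_mul_of_nonneg_left hH1x hεγ.le) hK₀ hK0x
    · exact (div_le_one hK₀).mpr hεH
  have hθQ : θ₂ ⊆ Q := by
    rw [hθ, hQ]
    rintro ⟨x, y⟩ ⟨hx, h1, h2⟩
    obtain ⟨hd0, hd1, hd2⟩ := hδb x hx
    simp only at h1
    exact ⟨hx, by linarith, h2⟩
  have hQfin : volume Q < ⊤ := by
    rw [hQ, show (volume : Measure (ℝ × ℝ)) = (volume : Measure ℝ).prod volume from
      MeasureTheory.Measure.volume_eq_prod ℝ ℝ, Measure.prod_prod, Real.volume_Icc, Real.volume_Ioo]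
    exact ENNReal.mul_lt_top ENNReal.ofReal_lt_top ENNReal.ofReal_lt_top
  haveI hQfm : IsFiniteMeasure (volume.restrict Q) :=
    ⟨by rwa [Measure.restrict_apply_univ]⟩
  -- continuity and differentiability
  have hwC : ContinuousOn w U := hw.continuousOn
  have hdC : ContinuousOn (fun p => fderiv ℝ w p) U :=
    hw.continuousOn_fderiv_of_isOpen hU le_rfl
  have hwxC : ContinuousOn (fun p => fderiv ℝ w p (1, 0)) U :=
    (ContinuousLinearMap.apply ℝ ℝ ((1:ℝ), (0:ℝ))).continuous.comp_continuousOn hdC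
  have hwyC : ContinuousOn (fun p => fderiv ℝ w p (0, 1)) U :=
    (ContinuousLinearMap.apply ℝ ℝ ((0:ℝ), (1:ℝ))).continuous.comp_continuousOn hdC
  have hwd : ∀ p ∈ U, HasFDerivAt w (fderiv ℝ w p) p := fun p hp =>
    (((hw.differentiableOn one_ne_zero).differentiableAt (hU.mem_nhds hp)).hasFDerivAt)
  -- bounds on the closure
  have hcpt : IsCompact (closure Q) := by
    rw [hclQ]; exact isCompact_Icc.prod isCompact_Icc
  obtain ⟨Mw, hMw⟩ := hcpt.exists_bound_of_continuousOn (hwC.mono hclU)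
  obtain ⟨Mx, hMx⟩ := hcpt.exists_bound_of_continuousOn (hwxC.mono hclU)
  obtain ⟨My, hMy⟩ := hcpt.exists_bound_of_continuousOn (hwyC.mono hclU)
  have hp0 : ((a : ℝ), (1/2 : ℝ)) ∈ closure Q := by
    rw [hclQ]
    exact Set.mk_mem_prod ⟨le_refl a, hab.le⟩ (by norm_num)
  have hMw0 : 0 ≤ Mw := le_trans (norm_nonneg _) (hMw _ hp0)
  have hMx0 : 0 ≤ Mx := le_trans (norm_nonneg _) (hMx _ hp0)
  have hMy0 : 0 ≤ My := le_trans (norm_nonneg _) (hMy _ hp0)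
  have hMwQ : ∀ p ∈ Q, |w p| ≤ Mw := fun p hp => hMw p (subset_closure hp)
  have hMxQ : ∀ p ∈ Q, |fderiv ℝ w p (1, 0)| ≤ Mx := fun p hp => hMx p (subset_closure hp)
  have hMyQ : ∀ p ∈ Q, |fderiv ℝ w p (0, 1)| ≤ My := fun p hp => hMy p (subset_closure hp)
  -- measurability on Q
  have hw_m : AEStronglyMeasurable w (volume.restrict Q) :=
    (hwC.mono hQsubU).aestronglyMeasurable hQm
  have hwx_m : AEStronglyMeasurable (fun p => fderiv ℝ w p (1, 0)) (volume.restrict Q) :=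
    (hwxC.mono hQsubU).aestronglyMeasurable hQm
  have hwy_m : AEStronglyMeasurable (fun p => fderiv ℝ w p (0, 1)) (volume.restrict Q) :=
    (hwyC.mono hQsubU).aestronglyMeasurable hQm
  have hK_m : AEStronglyMeasurable (fun p : ℝ × ℝ => K p.1) (volume.restrict Q) :=
    (hKm.comp measurable_fst).aestronglyMeasurable
  have sq_bdd : ∀ (g : ℝ × ℝ → ℝ) (N : ℝ), (∀ p ∈ Q, |g p| ≤ N) →
      ∀ p ∈ Q, |g p ^ 2| ≤ N ^ 2 := by
    intro g N hN p hp
    calc |g p ^ 2| = |g p| ^ 2 := abs_pow _ _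
      _ ≤ N ^ 2 := pow_le_pow_left₀ (abs_nonneg _) (hN p hp) 2
  -- integrability facts
  have hi_w2 : IntegrableOn (fun p => w p ^ 2) Q :=
    aux_integrableOn_of_bdd hQm hQfin
      ((continuous_pow 2).comp_aestronglyMeasurable hw_m) (sq_bdd w Mw hMwQ)
  have hi_wx2 : IntegrableOn (fun p => fderiv ℝ w p (1, 0) ^ 2) Q :=
    aux_integrableOn_of_bdd hQm hQfin
      ((continuous_pow 2).comp_aestronglyMeasurable hwx_m) (sq_bdd _ Mx hMxQ)
  have hi_wy2 : IntegrableOn (fun p => fderiv ℝ w p (0, 1) ^ 2) Q :=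
    aux_integrableOn_of_bdd hQm hQfin
      ((continuous_pow 2).comp_aestronglyMeasurable hwy_m) (sq_bdd _ My hMyQ)
  have habs_mul_le : ∀ (r s N P : ℝ), |r| ≤ N → |s| ≤ P → |r * s| ≤ N * P := by
    intro r s N P h1 h2
    rw [abs_mul]
    exact mul_le_mul h1 h2 (abs_nonneg _) (le_trans (abs_nonneg _) h1)
  have hKabs : ∀ p ∈ Q, |K p.1| ≤ K₁ := by
    intro p hp
    have hx : p.1 ∈ Set.Icc a b := by rw [hQ] at hp; exact hp.1
    obtain ⟨h1, h2⟩ := hKb p.1 hx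
    rw [abs_of_pos (by linarith)]; exact h2
  have hE1int : IntegrableOn (fun p => K p.1 * fderiv ℝ w p (1, 0) ^ 2) Q :=
    aux_integrableOn_of_bdd hQm hQfin
      (hK_m.mul ((continuous_pow 2).comp_aestronglyMeasurable hwx_m))
      (fun p hp => habs_mul_le _ _ _ _ (hKabs p hp) (sq_bdd _ Mx hMxQ p hp))
  have hKinv_abs : ∀ p ∈ Q, |1 / (ε ^ 2 * K p.1)| ≤ 1 / (ε ^ 2 * K₀) := by
    intro p hp
    have hx : p.1 ∈ Set.Icc a b := by rw [hQ] at hp; exact hp.1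
    obtain ⟨h1, h2⟩ := hKb p.1 hx
    have hKp : 0 < ε ^ 2 * K p.1 := mul_pos hε2 (by linarith)
    rw [abs_of_pos (one_div_pos.mpr hKp)]
    exact one_div_le_one_div_of_le (by positivity)
      (mul_le_mul_of_nonneg_left (by linarith) hε2.le)
  have hE2int : IntegrableOn (fun p => 1 / (ε ^ 2 * K p.1) * fderiv ℝ w p (0, 1) ^ 2) Q :=
    aux_integrableOn_of_bdd hQm hQfin
      (((measurable_const.div ((measurable_const.mul (hKm.comp measurable_fst)))).aestronglyMeasurable).mul
        ((continuous_pow 2).comp_aestronglyMeasurable hwy_m))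
      (fun p hp => habs_mul_le _ _ _ _ (hKinv_abs p hp) (sq_bdd _ My hMyQ p hp))
  have hE3int : IntegrableOn (fun p => K p.1 * w p ^ 2) Q :=
    aux_integrableOn_of_bdd hQm hQfin
      (hK_m.mul ((continuous_pow 2).comp_aestronglyMeasurable hw_m))
      (fun p hp => habs_mul_le _ _ _ _ (hKabs p hp) (sq_bdd _ Mw hMwQ p hp))
  have hi_E : IntegrableOn (fun p =>
      K p.1 * fderiv ℝ w p (1, 0) ^ 2 + 1 / (ε ^ 2 * K p.1) * fderiv ℝ w p (0, 1) ^ 2 +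
        K p.1 * w p ^ 2) Q := (hE1int.add hE2int).add hE3int
  have hi_G : IntegrableOn (fun p => 2 * w p ^ 2 + fderiv ℝ w p (0, 1) ^ 2) Q :=
    (hi_w2.const_mul 2).add hi_wy2
  have hi_f2 : IntegrableOn (fun p => f p ^ 2) Q := hf.integrable_sq
  have hf1 : Integrable f (volume.restrict Q) := hf.integrable one_le_two
  have hi_Kfw : IntegrableOn (fun p => K p.1 * f p * w p) θ₂ := by
    have hdom : Integrable (fun p => K₁ * Mw * |f p|) (volume.restrict θ₂) :=
      (IntegrableOn.mono_set (s := θ₂) (t := Q) hf1.abs hθQ).const_mul (K₁ * Mw)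
    refine hdom.mono' ?_ ?_
    · exact ((hK_m.mul hf.1).mul hw_m).mono_measure (Measure.restrict_mono hθQ le_rfl)
    · rw [ae_restrict_iff' hθm]
      refine ae_of_all _ fun p hp => ?_
      have hpQ : p ∈ Q := hθQ hp
      have h1 : |K p.1 * f p * w p| ≤ K₁ * |f p| * Mw := by
        calc |K p.1 * f p * w p| = |K p.1| * |f p| * |w p| := by rw [abs_mul, abs_mul]
          _ ≤ K₁ * |f p| * Mw := by
              refine mul_le_mul (mul_le_mul (hKabs p hpQ) le_rfl (abs_nonneg _)
                (by linarith [hKabs p hpQ, abs_nonneg (K p.1)])) (hMwQ p hpQ)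
                (abs_nonneg _) (by positivity)
      calc ‖K p.1 * f p * w p‖ = |K p.1 * f p * w p| := rfl
        _ ≤ K₁ * |f p| * Mw := h1
        _ = K₁ * Mw * |f p| := by ring
  have hi_young : IntegrableOn (fun p => K₁ * A * f p ^ 2 + K₁ * B * w p ^ 2) θ₂ :=
    ((IntegrableOn.mono_set hi_f2 hθQ).const_mul (K₁ * A)).add ((IntegrableOn.mono_set hi_w2 hθQ).const_mul (K₁ * B))
  -- pointwise facts on Q
  have hKQ : ∀ p ∈ Q, K₀ ≤ K p.1 ∧ K p.1 ≤ K₁ := by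
    intro p hp
    exact hKb p.1 (by rw [hQ] at hp; exact hp.1)
  -- Step A : lower bounds for the energy
  have hA1 : K₀ * (∫ p in Q, w p ^ 2) ≤ ∫ p in Q,
      (K p.1 * fderiv ℝ w p (1, 0) ^ 2 + 1 / (ε ^ 2 * K p.1) * fderiv ℝ w p (0, 1) ^ 2 +
        K p.1 * w p ^ 2) := by
    rw [← integral_const_mul]
    refine setIntegral_mono_on (hi_w2.const_mul K₀) hi_E hQm fun p hp => ?_
    obtain ⟨hl, hr⟩ := hKQ p hp
    have hKp : 0 < K p.1 := by linarith
    have h1 : 0 ≤ K p.1 * fderiv ℝ w p (1, 0) ^ 2 :=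
      mul_nonneg (by linarith) (sq_nonneg _)
    have h2 : 0 ≤ 1 / (ε ^ 2 * K p.1) * fderiv ℝ w p (0, 1) ^ 2 :=
      mul_nonneg (le_of_lt (one_div_pos.mpr (mul_pos hε2 hKp))) (sq_nonneg _)
    have h3 : K₀ * w p ^ 2 ≤ K p.1 * w p ^ 2 :=
      mul_le_mul_of_nonneg_right hl (sq_nonneg _)
    linarith
  have hA2 : K₀ * (∫ p in Q, fderiv ℝ w p (1, 0) ^ 2) ≤ ∫ p in Q,
      (K p.1 * fderiv ℝ w p (1, 0) ^ 2 + 1 / (ε ^ 2 * K p.1) * fderiv ℝ w p (0, 1) ^ 2 +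
        K p.1 * w p ^ 2) := by
    rw [← integral_const_mul]
    refine setIntegral_mono_on (hi_wx2.const_mul K₀) hi_E hQm fun p hp => ?_
    obtain ⟨hl, hr⟩ := hKQ p hp
    have hKp : 0 < K p.1 := by linarith
    have h2 : 0 ≤ 1 / (ε ^ 2 * K p.1) * fderiv ℝ w p (0, 1) ^ 2 :=
      mul_nonneg (le_of_lt (one_div_pos.mpr (mul_pos hε2 hKp))) (sq_nonneg _)
    have h3 : 0 ≤ K p.1 * w p ^ 2 := mul_nonneg (by linarith) (sq_nonneg _)
    have h1 : K₀ * fderiv ℝ w p (1, 0) ^ 2 ≤ K p.1 * fderiv ℝ w p (1, 0) ^ 2 :=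
      mul_le_mul_of_nonneg_right hl (sq_nonneg _)
    linarith
  have hA3 : (1 / ε ^ 2) * (∫ p in Q, fderiv ℝ w p (0, 1) ^ 2) ≤ K₁ * ∫ p in Q,
      (K p.1 * fderiv ℝ w p (1, 0) ^ 2 + 1 / (ε ^ 2 * K p.1) * fderiv ℝ w p (0, 1) ^ 2 +
        K p.1 * w p ^ 2) := by
    rw [← integral_const_mul, ← integral_const_mul]
    refine setIntegral_mono_on (hi_wy2.const_mul (1 / ε ^ 2)) (hi_E.const_mul K₁) hQm
      fun p hp => ?_
    obtain ⟨hl, hr⟩ := hKQ p hp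
    have hKp : 0 < K p.1 := by linarith
    have e1 : 1 / (ε ^ 2 * K₁) ≤ 1 / (ε ^ 2 * K p.1) :=
      one_div_le_one_div_of_le (by positivity) (mul_le_mul_of_nonneg_left hr hε2.le)
    have e2 : K₁ * (1 / (ε ^ 2 * K₁)) = 1 / ε ^ 2 := by
      field_simp
      try ring
    have key : 1 / ε ^ 2 * fderiv ℝ w p (0, 1) ^ 2 ≤
        K₁ * (1 / (ε ^ 2 * K p.1)) * fderiv ℝ w p (0, 1) ^ 2 := by
      refine mul_le_mul_of_nonneg_right ?_ (sq_nonneg _)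
      rw [← e2]
      exact mul_le_mul_of_nonneg_left e1 hK₁.le
    have h1 : 0 ≤ K₁ * (K p.1 * fderiv ℝ w p (1, 0) ^ 2) :=
      mul_nonneg hK₁.le (mul_nonneg hKp.le (sq_nonneg _))
    have h3 : 0 ≤ K₁ * (K p.1 * w p ^ 2) :=
      mul_nonneg hK₁.le (mul_nonneg hKp.le (sq_nonneg _))
    linarith [key, h1, h3]
  have hE0 : 0 ≤ ∫ p in Q,
      (K p.1 * fderiv ℝ w p (1, 0) ^ 2 + 1 / (ε ^ 2 * K p.1) * fderiv ℝ w p (0, 1) ^ 2 +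
        K p.1 * w p ^ 2) := by
    refine setIntegral_nonneg hQm fun p hp => ?_
    obtain ⟨hl, hr⟩ := hKQ p hp
    have hKp : 0 < K p.1 := by linarith
    have h1 : 0 ≤ K p.1 * fderiv ℝ w p (1, 0) ^ 2 := mul_nonneg hKp.le (sq_nonneg _)
    have h2 : 0 ≤ 1 / (ε ^ 2 * K p.1) * fderiv ℝ w p (0, 1) ^ 2 :=
      mul_nonneg (le_of_lt (one_div_pos.mpr (mul_pos hε2 hKp))) (sq_nonneg _)
    have h3 : 0 ≤ K p.1 * w p ^ 2 := mul_nonneg hKp.le (sq_nonneg _)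
    linarith
  have hA1nn : 0 ≤ ∫ p in Q, w p ^ 2 := setIntegral_nonneg hQm fun p _ => sq_nonneg _
  have hA3nn : 0 ≤ ∫ p in Q, fderiv ℝ w p (0, 1) ^ 2 :=
    setIntegral_nonneg hQm fun p _ => sq_nonneg _
  -- Step B : strip estimate via Fubini
  have hprod : (volume : Measure (ℝ × ℝ)).restrict Q =
      ((volume : Measure ℝ).restrict (Set.Icc a b)).prod
        ((volume : Measure ℝ).restrict (Set.Ioo (0:ℝ) 1)) := by
    rw [hQ, Measure.volume_eq_prod ℝ ℝ]
    exact (Measure.prod_restrict _ _).symm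
  have hux : ∀ x ∈ Set.Icc a b, ∀ t ∈ Set.Icc (0:ℝ) 1,
      HasDerivAt (fun t => w (x, t)) (fderiv ℝ w (x, t) (0, 1)) t := by
    intro x hx t ht
    have hline : HasDerivAt (fun t : ℝ => ((x : ℝ), t)) ((0:ℝ), (1:ℝ)) t :=
      (hasDerivAt_const t x).prodMk (hasDerivAt_id t)
    have := (hwd _ (hQU x hx t ht)).comp_hasDerivAt t hline
    exact this
  have hu'c : ∀ x ∈ Set.Icc a b,
      ContinuousOn (fun t => fderiv ℝ w (x, t) (0, 1)) (Set.Icc (0:ℝ) 1) := by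
    intro x hx
    exact hwyC.comp ((continuous_const.prodMk continuous_id).continuousOn)
      (fun t ht => hQU x hx t ht)
  have hstrip : ∀ x ∈ Set.Icc a b,
      (∫ y in Set.Ioo (1 - ε ^ γ * H x / K x) 1, w (x, y) ^ 2) ≤
        (ε ^ γ * H₁ / K₀) *
          ∫ t in Set.Ioo (0:ℝ) 1, (2 * w (x, t) ^ 2 + fderiv ℝ w (x, t) (0, 1) ^ 2) := by
    intro x hx
    obtain ⟨hd0, hd1, hd2⟩ := hδb x hx
    have hgnn : 0 ≤ ∫ t in Set.Ioo (0:ℝ) 1, (2 * w (x, t) ^ 2 + fderiv ℝ w (x, t) (0, 1) ^ 2) :=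
      setIntegral_nonneg measurableSet_Ioo fun t _ => by positivity
    calc (∫ y in Set.Ioo (1 - ε ^ γ * H x / K x) 1, w (x, y) ^ 2) ≤
        (ε ^ γ * H x / K x) *
          ∫ t in Set.Ioo (0:ℝ) 1, (2 * w (x, t) ^ 2 + fderiv ℝ w (x, t) (0, 1) ^ 2) :=
          aux_strip _ _ (hux x hx) (hu'c x hx) hd0 (le_trans hd1 hd2)
      _ ≤ _ := mul_le_mul_of_nonneg_right hd1 hgnn
  -- inner integral identification for the indicator of θ₂
  have hinner : ∀ x ∈ Set.Icc a b,
      (∫ y in Set.Ioo (0:ℝ) 1, θ₂.indicator (fun q => w q ^ 2) (x, y)) =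
        ∫ y in Set.Ioo (1 - ε ^ γ * H x / K x) 1, w (x, y) ^ 2 := by
    intro x hx
    obtain ⟨hd0, hd1, hd2⟩ := hδb x hx
    have hsub : Set.Ioo (1 - ε ^ γ * H x / K x) 1 ⊆ Set.Ioo (0:ℝ) 1 := by
      intro y hy
      constructor
      · have : (0:ℝ) ≤ 1 - ε ^ γ * H x / K x := by
          have := le_trans hd1 hd2; linarith
        linarith [hy.1]
      · exact hy.2
    have hfun : (fun y => θ₂.indicator (fun q => w q ^ 2) (x, y)) =
        fun y => (Set.Ioo (1 - ε ^ γ * H x / K x) 1).indicator (fun y => w (x, y) ^ 2) y := by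
      funext y
      by_cases hmem : y ∈ Set.Ioo (1 - ε ^ γ * H x / K x) 1
      · rw [Set.indicator_of_mem hmem]
        have : ((x : ℝ), y) ∈ θ₂ := by rw [hθ]; exact ⟨hx, hmem.1, hmem.2⟩
        rw [Set.indicator_of_mem this]
      · rw [Set.indicator_of_notMem hmem]
        have : ((x : ℝ), y) ∉ θ₂ := by
          intro hcon; rw [hθ] at hcon; exact hmem ⟨hcon.2.1, hcon.2.2⟩
        rw [Set.indicator_of_notMem this]
    rw [hfun, setIntegral_indicator measurableSet_Ioo,
      Set.inter_eq_self_of_subset_right hsub]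
  -- Fubini
  have hi_ind : Integrable (θ₂.indicator (fun q => w q ^ 2))
      (((volume : Measure ℝ).restrict (Set.Icc a b)).prod
        ((volume : Measure ℝ).restrict (Set.Ioo (0:ℝ) 1))) := by
    rw [← hprod]; exact hi_w2.indicator hθm
  have hi_G' : Integrable (fun p : ℝ × ℝ => 2 * w p ^ 2 + fderiv ℝ w p (0, 1) ^ 2)
      (((volume : Measure ℝ).restrict (Set.Icc a b)).prod
        ((volume : Measure ℝ).restrict (Set.Ioo (0:ℝ) 1))) := by
    rw [← hprod]; exact hi_G
  have hT_eq : (∫ p in θ₂, w p ^ 2) =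
      ∫ x in Set.Icc a b, ∫ y in Set.Ioo (0:ℝ) 1, θ₂.indicator (fun q => w q ^ 2) (x, y) := by
    have h1 : (∫ p in θ₂, w p ^ 2) = ∫ p in Q, θ₂.indicator (fun q => w q ^ 2) p := by
      rw [setIntegral_indicator hθm, Set.inter_eq_self_of_subset_right hθQ]
    rw [h1, show (volume : Measure (ℝ × ℝ)).restrict Q = _ from hprod]
    exact integral_prod _ hi_ind
  have hG_eq : (∫ p in Q, (2 * w p ^ 2 + fderiv ℝ w p (0, 1) ^ 2)) =
      ∫ x in Set.Icc a b, ∫ y in Set.Ioo (0:ℝ) 1,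
        (2 * w (x, y) ^ 2 + fderiv ℝ w (x, y) (0, 1) ^ 2) := by
    rw [show (volume : Measure (ℝ × ℝ)).restrict Q = _ from hprod]
    exact integral_prod _ hi_G'
  have hout : (∫ x in Set.Icc a b, ∫ y in Set.Ioo (0:ℝ) 1,
        θ₂.indicator (fun q => w q ^ 2) (x, y)) ≤
      ∫ x in Set.Icc a b, (ε ^ γ * H₁ / K₀) *
        ∫ y in Set.Ioo (0:ℝ) 1, (2 * w (x, y) ^ 2 + fderiv ℝ w (x, y) (0, 1) ^ 2) := by
    refine setIntegral_mono_on ?_ ?_ measurableSet_Icc fun x hx => ?_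
    · exact hi_ind.integral_prod_left
    · exact hi_G'.integral_prod_left.const_mul _
    · rw [hinner x hx]
      exact hstrip x hx
  have hT : (∫ p in θ₂, w p ^ 2) ≤
      (ε ^ γ * H₁ / K₀) * ∫ p in Q, (2 * w p ^ 2 + fderiv ℝ w p (0, 1) ^ 2) := by
    rw [hT_eq, hG_eq, ← integral_const_mul]
    exact hout
  -- Step C : Young's inequality on θ₂
  have hY : (∫ p in θ₂, K p.1 * f p * w p) ≤
      K₁ * A * (∫ p in θ₂, f p ^ 2) + K₁ * B * (∫ p in θ₂, w p ^ 2) := by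
    have h := setIntegral_mono_on hi_Kfw hi_young hθm ?_
    · rwa [integral_add ((IntegrableOn.mono_set hi_f2 hθQ).const_mul (K₁ * A))
        ((IntegrableOn.mono_set hi_w2 hθQ).const_mul (K₁ * B)),
        integral_const_mul, integral_const_mul] at h
    · intro p hp
      have hpQ : p ∈ Q := hθQ hp
      obtain ⟨hl, hr⟩ := hKQ p hpQ
      have e1 : 4 * A ^ 2 * B * (f p) ^ 2 = A * (f p) ^ 2 := by
        linear_combination (A * (f p) ^ 2) * hAB
      have e2 : 4 * A * B * (f p * w p) = f p * w p := by
        linear_combination (f p * w p) * hAB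
      have hfw : f p * w p ≤ A * f p ^ 2 + B * w p ^ 2 := by
        nlinarith [mul_nonneg hB.le (sq_nonneg (2 * A * f p - w p)), e1, e2]
      have hrhs0 : 0 ≤ A * f p ^ 2 + B * w p ^ 2 :=
        add_nonneg (mul_nonneg hA.le (sq_nonneg _)) (mul_nonneg hB.le (sq_nonneg _))
      nlinarith [mul_nonneg (show (0:ℝ) ≤ K p.1 by linarith) (sub_nonneg.mpr hfw),
        mul_nonneg (show (0:ℝ) ≤ K₁ - K p.1 by linarith) hrhs0]
  have hTnn : 0 ≤ ∫ p in θ₂, w p ^ 2 := setIntegral_nonneg hθm fun p _ => sq_nonneg _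
  -- combine everything
  have hG_split : (∫ p in Q, (2 * w p ^ 2 + fderiv ℝ w p (0, 1) ^ 2)) =
      2 * (∫ p in Q, w p ^ 2) + ∫ p in Q, fderiv ℝ w p (0, 1) ^ 2 := by
    rw [integral_add (hi_w2.const_mul 2) hi_wy2, integral_const_mul]
  have hA3' : (∫ p in Q, fderiv ℝ w p (0, 1) ^ 2) ≤ K₁ * ∫ p in Q,
      (K p.1 * fderiv ℝ w p (1, 0) ^ 2 + 1 / (ε ^ 2 * K p.1) * fderiv ℝ w p (0, 1) ^ 2 +
        K p.1 * w p ^ 2) := by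
    have h1 : (∫ p in Q, fderiv ℝ w p (0, 1) ^ 2) ≤
        (1 / ε ^ 2) * ∫ p in Q, fderiv ℝ w p (0, 1) ^ 2 := by
      have : (1:ℝ) ≤ 1 / ε ^ 2 := by
        rw [le_div_iff₀ hε2]; linarith
      nlinarith [hA3nn]
    linarith [hA3]
  have hG_le : (∫ p in Q, (2 * w p ^ 2 + fderiv ℝ w p (0, 1) ^ 2)) ≤
      (2 / K₀ + K₁) * ∫ p in Q,
      (K p.1 * fderiv ℝ w p (1, 0) ^ 2 + 1 / (ε ^ 2 * K p.1) * fderiv ℝ w p (0, 1) ^ 2 +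
        K p.1 * w p ^ 2) := by
    rw [hG_split]
    have h1 : 2 * (∫ p in Q, w p ^ 2) ≤ (2 / K₀) * ∫ p in Q,
        (K p.1 * fderiv ℝ w p (1, 0) ^ 2 + 1 / (ε ^ 2 * K p.1) * fderiv ℝ w p (0, 1) ^ 2 +
          K p.1 * w p ^ 2) := by
      rw [div_mul_eq_mul_div, le_div_iff₀ hK₀]
      nlinarith [hA1]
    nlinarith [hA3', h1]
  -- final energy bound
  have hEM : (∫ p in Q,
      (K p.1 * fderiv ℝ w p (1, 0) ^ 2 + 1 / (ε ^ 2 * K p.1) * fderiv ℝ w p (0, 1) ^ 2 +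
        K p.1 * w p ^ 2)) ≤ M := by
    have step1 : (∫ p in θ₂, K p.1 * f p * w p) ≤
        K₁ * A * (c * ε ^ γ) + K₁ * B * ((ε ^ γ * H₁ / K₀) *
          ∫ p in Q, (2 * w p ^ 2 + fderiv ℝ w p (0, 1) ^ 2)) := by
      have t1 : K₁ * A * (∫ p in θ₂, f p ^ 2) ≤ K₁ * A * (c * ε ^ γ) :=
        mul_le_mul_of_nonneg_left hfθ (by positivity)
      have t2 : K₁ * B * (∫ p in θ₂, w p ^ 2) ≤ K₁ * B * ((ε ^ γ * H₁ / K₀) *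
          ∫ p in Q, (2 * w p ^ 2 + fderiv ℝ w p (0, 1) ^ 2)) :=
        mul_le_mul_of_nonneg_left hT (by positivity)
      linarith [hY]
    have step2 : (∫ p in Q,
        (K p.1 * fderiv ℝ w p (1, 0) ^ 2 + 1 / (ε ^ 2 * K p.1) * fderiv ℝ w p (0, 1) ^ 2 +
          K p.1 * w p ^ 2)) ≤ (1 / ε ^ γ) * (K₁ * A * (c * ε ^ γ) +
          K₁ * B * ((ε ^ γ * H₁ / K₀) *
            ∫ p in Q, (2 * w p ^ 2 + fderiv ℝ w p (0, 1) ^ 2))) := by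
      rw [hEI]
      exact mul_le_mul_of_nonneg_left step1 (by positivity)
    have hεne : (ε : ℝ) ^ γ ≠ 0 := ne_of_gt hεγ
    have step3 : (1 / ε ^ γ) * (K₁ * A * (c * ε ^ γ) +
        K₁ * B * ((ε ^ γ * H₁ / K₀) *
          ∫ p in Q, (2 * w p ^ 2 + fderiv ℝ w p (0, 1) ^ 2))) =
        K₁ * A * c + K₁ * B * (H₁ / K₀) *
          ∫ p in Q, (2 * w p ^ 2 + fderiv ℝ w p (0, 1) ^ 2) := by
      field_simp
    have step4 : K₁ * B * (H₁ / K₀) *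
        (∫ p in Q, (2 * w p ^ 2 + fderiv ℝ w p (0, 1) ^ 2)) ≤
        B * D * ∫ p in Q,
        (K p.1 * fderiv ℝ w p (1, 0) ^ 2 + 1 / (ε ^ 2 * K p.1) * fderiv ℝ w p (0, 1) ^ 2 +
          K p.1 * w p ^ 2) := by
      have hcoef : 0 ≤ K₁ * B * (H₁ / K₀) := by positivity
      calc K₁ * B * (H₁ / K₀) * (∫ p in Q, (2 * w p ^ 2 + fderiv ℝ w p (0, 1) ^ 2)) ≤
          K₁ * B * (H₁ / K₀) * ((2 / K₀ + K₁) * ∫ p in Q,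
            (K p.1 * fderiv ℝ w p (1, 0) ^ 2 +
              1 / (ε ^ 2 * K p.1) * fderiv ℝ w p (0, 1) ^ 2 + K p.1 * w p ^ 2)) :=
            mul_le_mul_of_nonneg_left hG_le hcoef
        _ = B * D * ∫ p in Q,
            (K p.1 * fderiv ℝ w p (1, 0) ^ 2 +
              1 / (ε ^ 2 * K p.1) * fderiv ℝ w p (0, 1) ^ 2 + K p.1 * w p ^ 2) := by
            rw [hD]; ring
    have step5 : B * D * (∫ p in Q,
        (K p.1 * fderiv ℝ w p (1, 0) ^ 2 + 1 / (ε ^ 2 * K p.1) * fderiv ℝ w p (0, 1) ^ 2 +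
          K p.1 * w p ^ 2)) ≤ (1 / 2) * ∫ p in Q,
        (K p.1 * fderiv ℝ w p (1, 0) ^ 2 + 1 / (ε ^ 2 * K p.1) * fderiv ℝ w p (0, 1) ^ 2 +
          K p.1 * w p ^ 2) := mul_le_mul_of_nonneg_right hBD hE0
    rw [hM]
    linarith [step2, step3.le, step3.ge, step4, step5]
  -- conclusions
  have hg1 : (∫ p in Q, w p ^ 2) ≤ M / K₀ := by
    rw [le_div_iff₀ hK₀]
    nlinarith [hA1, hEM]
  have hg2 : (∫ p in Q, fderiv ℝ w p (1, 0) ^ 2) ≤ M / K₀ := by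
    rw [le_div_iff₀ hK₀]
    nlinarith [hA2, hEM]
  have hg3 : (1 / ε ^ 2) * (∫ p in Q, fderiv ℝ w p (0, 1) ^ 2) ≤ K₁ * M := by
    calc (1 / ε ^ 2) * (∫ p in Q, fderiv ℝ w p (0, 1) ^ 2) ≤ K₁ * ∫ p in Q,
        (K p.1 * fderiv ℝ w p (1, 0) ^ 2 + 1 / (ε ^ 2 * K p.1) * fderiv ℝ w p (0, 1) ^ 2 +
          K p.1 * w p ^ 2) := hA3
      _ ≤ K₁ * M := mul_le_mul_of_nonneg_left hEM hK₁.le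
  have hKM : 0 ≤ K₁ * M := by positivity
  have hMK : 0 ≤ M / K₀ := by positivity
  exact ⟨by linarith [hg1], by linarith [hg2], by linarith [hg3]⟩
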